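/- A symmetric tensor A ∈ ℝ^{n×n×p} is T-positive semidefinite if and only if there exists a tensor P ∈ ℝ^{m×n×p} (for some m) such that A = Pᵀ * P, where * is the T-product and Pᵀ is the tensor transpose. -/

import Mathlib

open Matrix BigOperators

variable {p : ℕ}

/-- Block circulant matrix of a third-order tensor (tensor = family of frontal slices). -/
def bcirc {I J : Type*} (A : Fin p → Matrix I J ℝ) :
    Matrix (Fin p × I) (Fin p × J) ℝ :=
  Matrix.of fun ik jl => A (ik.1 - jl.1) ik.2 jl.2

/-- T-product of third-order tensors: `(A*B)^(k) = Σ_j A^(k-j) B^(j)` (indices mod p),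
which is exactly `fold(bcirc(A) · unfold(B))`. -/
def tProd {I J K : Type*} [Fintype J] (A : Fin p → Matrix I J ℝ)
    (B : Fin p → Matrix J K ℝ) : Fin p → Matrix I K ℝ :=
  fun k => ∑ j : Fin p, A (k - j) * B j

/-- Tensor transpose: transpose each frontal slice and reverse slices 2..p. -/
def ttrans {I J : Type*} (A : Fin p → Matrix I J ℝ) :
    Fin p → Matrix J I ℝ :=
  fun k => (A (-k))ᵀ

/-- Identity tensor: first frontal slice the identity matrix, other slices zero. -/
def tid (I : Type*) [DecidableEq I] [NeZero p] : Fin p → Matrix I I ℝ :=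
  fun k => if k = 0 then 1 else 0

/-- Entrywise (Frobenius) inner product of third-order tensors. -/
def tinner {I J : Type*} [Fintype I] [Fintype J]
    (X Y : Fin p → Matrix I J ℝ) : ℝ :=
  ∑ k, ∑ i, ∑ j, X k i j * Y k i j

/-- Symmetric T-positive semidefinite tensor. -/
def TPSD {I : Type*} [Fintype I] (A : Fin p → Matrix I I ℝ) : Prop :=
  ttrans A = A ∧ ∀ X : Fin p → Matrix I (Fin 1) ℝ, 0 ≤ tinner X (tProd A X)

/-- Symmetric T-positive definite tensor. -/
def TPD {I : Type*} [Fintype I] (A : Fin p → Matrix I I ℝ) : Prop :=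
  ttrans A = A ∧ ∀ X : Fin p → Matrix I (Fin 1) ℝ, X ≠ 0 → 0 < tinner X (tProd A X)

/-- k-fold T-product power of a tensor, with `tpow A 0` the identity tensor. -/
def tpow {I : Type*} [Fintype I] [DecidableEq I] [NeZero p]
    (A : Fin p → Matrix I I ℝ) : ℕ → Fin p → Matrix I I ℝ
  | 0 => tid I
  | k + 1 => tProd A (tpow A k)

lemma bcirc_tProd {I J K : Type*} [Fintype J] (A : Fin p → Matrix I J ℝ)
    (B : Fin p → Matrix J K ℝ) : bcirc (tProd A B) = bcirc A * bcirc B := by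
  ext ⟨k, i⟩ ⟨l, j⟩
  simp only [bcirc, tProd, Matrix.mul_apply, Matrix.of_apply, Matrix.sum_apply,
    Fintype.sum_prod_type]
  haveI : NeZero p := ⟨k.pos.ne'⟩
  refine (Fintype.sum_equiv (Equiv.addRight l) _ _ fun t => ?_)
  have h1 : k - (t + l) = k - l - t := by abel
  have h2 : t + l - l = t := by abel
  simp [Matrix.mul_apply, Equiv.addRight, h1, h2]

lemma bcirc_ttrans {I J : Type*} (A : Fin p → Matrix I J ℝ) :
    bcirc (ttrans A) = (bcirc A)ᵀ := by
  ext ⟨k, i⟩ ⟨l, j⟩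
  haveI : NeZero p := ⟨k.pos.ne'⟩
  show (A (-(k - l)))ᵀ i j = _
  rw [neg_sub]
  rfl

lemma bcirc_inj {I J : Type*} (A B : Fin p → Matrix I J ℝ)
    (h : bcirc A = bcirc B) : A = B := by
  funext k
  ext i j
  haveI : NeZero p := ⟨k.pos.ne'⟩
  have := congrFun (congrFun h (k, i)) (k - k, j)
  simpa [bcirc, sub_sub_cancel] using this

lemma tinner_eq {n : ℕ} (A : Fin p → Matrix (Fin n) (Fin n) ℝ)
    (X : Fin p → Matrix (Fin n) (Fin 1) ℝ) :
    tinner X (tProd A X) =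
      (fun ki : Fin p × Fin n => X ki.1 ki.2 0) ⬝ᵥ
        (bcirc A) *ᵥ (fun ki : Fin p × Fin n => X ki.1 ki.2 0) := by
  simp only [tinner, tProd, dotProduct, mulVec, bcirc, Matrix.sum_apply,
    Matrix.mul_apply, Fintype.sum_prod_type, Matrix.of_apply, dotProduct,
    Fin.sum_univ_one, Finset.mul_sum]

lemma conjT_eq_transpose {I J : Type*} (M : Matrix I J ℝ) : Mᴴ = Mᵀ := by
  ext i j; simp [conjTranspose_apply]

open scoped MatrixOrder

/-- a symmetric tensor A is T-PSD iff A = Pᵀ * P for some tensor P. -/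
theorem tpsd_iff_factorization {n p : ℕ} (A : Fin p → Matrix (Fin n) (Fin n) ℝ)
    (hA : ttrans A = A) :
    TPSD A ↔ ∃ (m : ℕ) (P : Fin p → Matrix (Fin m) (Fin n) ℝ),
      A = tProd (ttrans P) P := by
  rcases Nat.eq_zero_or_pos p with hp | hp
  · subst hp
    constructor
    · intro _; exact ⟨0, fun _ => 0, funext fun k => isEmptyElim k⟩
    · intro _; exact ⟨hA, fun X => by simp [tinner]⟩
  haveI : NeZero p := ⟨hp.ne'⟩
  constructor
  · rintro ⟨-, hq⟩
    have hM : (bcirc A).PosSemidef := by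
      refine Matrix.PosSemidef.of_dotProduct_mulVec_nonneg ?_ ?_
      · show (bcirc A)ᴴ = bcirc A
        rw [conjT_eq_transpose, ← bcirc_ttrans, hA]
      · intro x
        have := hq (fun k => Matrix.of fun i _ => x (k, i))
        rw [tinner_eq] at this
        simpa using this
    set S := CFC.sqrt (bcirc A) with hSdef
    have hSpsd := Matrix.nonneg_iff_posSemidef.mp (CFC.sqrt_nonneg (bcirc A))
    have hSsym : Sᵀ = S := by rw [← conjT_eq_transpose]; exact hSpsd.1
    set E : Fin p → (Fin p × Fin n) ≃ (Fin p × Fin n) :=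
      fun t => Equiv.prodCongr (Equiv.addRight t) (Equiv.refl _) with hE
    have hMshift : ∀ t, (bcirc A).submatrix (E t) (E t) = bcirc A := by
      intro t
      ext ⟨k, i⟩ ⟨l, j⟩
      simp [bcirc, hE, Equiv.addRight, add_sub_add_right_eq_sub]
    have hSshift : ∀ t, S.submatrix (E t) (E t) = S := by
      intro t
      have h1 : (S.submatrix (E t) (E t)).PosSemidef := hSpsd.submatrix _
      have h2 : (S.submatrix (E t) (E t)) ^ 2 = bcirc A := by
        rw [pow_two, Matrix.submatrix_mul_equiv S S _ (E t) _,
          CFC.sqrt_mul_sqrt_self (bcirc A) (Matrix.nonneg_iff_posSemidef.mpr hM),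
          hMshift]
      exact ((CFC.sqrt_eq_iff _ _ (Matrix.nonneg_iff_posSemidef.mpr hM)
          (Matrix.nonneg_iff_posSemidef.mpr h1)).mpr (by rw [← pow_two]; exact h2)).symm
    refine ⟨n, fun k => Matrix.of fun i j => S (k, i) (0, j), ?_⟩
    have hbP : bcirc (fun k => Matrix.of fun i j => S (k, i) (0, j)) = S := by
      ext ⟨k, i⟩ ⟨l, j⟩
      have := congrFun (congrFun (hSshift l) (k - l, i)) (0, j)
      simp only [Matrix.submatrix_apply, hE, Equiv.prodCongr_apply, Equiv.coe_addRight,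
        Equiv.refl_apply, Prod.map] at this
      simp only [bcirc, Matrix.of_apply]
      rw [← this, sub_add_cancel, zero_add]
    apply bcirc_inj
    rw [bcirc_tProd, bcirc_ttrans, hbP, hSsym,
      CFC.sqrt_mul_sqrt_self (bcirc A) (Matrix.nonneg_iff_posSemidef.mpr hM)]
  · rintro ⟨m, P, hP⟩
    refine ⟨hA, fun X => ?_⟩
    rw [tinner_eq]
    have hpsd : (bcirc A).PosSemidef := by
      rw [hP, bcirc_tProd, bcirc_ttrans, ← conjT_eq_transpose]
      exact Matrix.posSemidef_conjTranspose_mul_self _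
    simpa using hpsd.dotProduct_mulVec_nonneg (fun ki : Fin p × Fin n => X ki.1 ki.2 0)
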